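/- Let X and Y be Banach spaces and T : X → Y a compact linear operator. Then there exists a sequence (u_n) in X* with ‖u_n‖ → 0 such that ‖Tx‖ ≤ sup_n |u_n(x)| for every x ∈ X. -/

import Mathlib

open Filter Metric

section Aux

lemma terz_enum_lemma {E : Type*} [NormedAddCommGroup E]
    (l : ℕ → List E) (c : ℕ → ℝ) (hc : Tendsto c atTop (nhds 0))
    (hnorm : ∀ k, ∀ e ∈ l k, ‖e‖ ≤ c k) :
    ∃ u : ℕ → E, Tendsto (fun n => ‖u n‖) atTop (nhds 0) ∧
      (∀ k, ∀ e ∈ l k, ∃ n, u n = e) ∧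
      (∀ n, u n = 0 ∨ u n ∈ l n.unpair.1) := by
  refine ⟨fun n => (l n.unpair.1).getD n.unpair.2 0, ?_, ?_, ?_⟩
  · rw [Metric.tendsto_atTop]
    intro ε hε
    obtain ⟨K, hK⟩ := (Metric.tendsto_atTop.1 hc) ε hε
    refine ⟨Nat.pair K ((Finset.range K).sup (fun k => (l k).length) + 1), fun n hn => ?_⟩
    set M := (Finset.range K).sup (fun k => (l k).length) + 1 with hM
    set k := n.unpair.1 with hk
    set i := n.unpair.2 with hi
    have hnorm0 : ‖(0 : E)‖ = 0 := norm_zero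
    by_cases h : i < (l k).length
    · have hmem : (l k).getD i 0 ∈ l k := by
        rw [List.getD_eq_getElem _ _ h]; exact List.getElem_mem h
      have hle : ‖(l k).getD i 0‖ ≤ c k := hnorm k _ hmem
      have hkK : K ≤ k := by
        by_contra hkK
        push_neg at hkK
        have hiM : i < M := by
          have : (l k).length ≤ (Finset.range K).sup (fun k => (l k).length) :=
            Finset.le_sup (f := fun k => (l k).length) (Finset.mem_range.2 hkK)
          omega
        have : n < Nat.pair K M := by
          calc n = Nat.pair k i := (Nat.pair_unpair n).symm
          _ < Nat.pair k M := Nat.pair_lt_pair_right _ hiM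
          _ < Nat.pair K M := Nat.pair_lt_pair_left _ hkK
        omega
      have : |c k| < ε := by simpa [Real.dist_eq] using hK k hkK
      have : c k < ε := lt_of_le_of_lt (le_abs_self _) this
      simp only [Real.dist_eq, sub_zero]
      rw [abs_of_nonneg (norm_nonneg _)]
      exact lt_of_le_of_lt hle this
    · push_neg at h
      show dist ‖(l k).getD i 0‖ 0 < ε
      rw [List.getD_eq_default _ _ h]
      simpa [Real.dist_eq] using hε
  · intro k e he
    obtain ⟨i, hil, hie⟩ := List.mem_iff_getElem.1 he
    refine ⟨Nat.pair k i, ?_⟩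
    show (l (Nat.pair k i).unpair.1).getD (Nat.pair k i).unpair.2 0 = e
    rw [Nat.unpair_pair]
    rw [List.getD_eq_getElem _ _ hil, hie]
  · intro n
    by_cases h : n.unpair.2 < (l n.unpair.1).length
    · right
      show (l n.unpair.1).getD n.unpair.2 0 ∈ _
      rw [List.getD_eq_getElem _ _ h]; exact List.getElem_mem h
    · left
      push_neg at h
      show (l n.unpair.1).getD n.unpair.2 0 = 0
      rw [List.getD_eq_default _ _ h]

lemma terz_schauder_tb {𝕜 X Y : Type*} [RCLike 𝕜]
    [NormedAddCommGroup X] [NormedSpace 𝕜 X]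
    [NormedAddCommGroup Y] [NormedSpace 𝕜 Y]
    (T : X →L[𝕜] Y) (hT : IsCompactOperator T) :
    TotallyBounded {f : X →L[𝕜] 𝕜 | ∃ g : Y →L[𝕜] 𝕜, ‖g‖ ≤ 1 ∧ f = g.comp T} := by
  rw [Metric.totallyBounded_iff]
  intro ε hε
  have hε4 : (0:ℝ) < ε/4 := by positivity
  have himg : TotallyBounded (T '' Metric.closedBall 0 1) := by
    obtain ⟨K, hK, hsub⟩ := hT.image_closedBall_subset_compact 1
    exact hK.totallyBounded.subset hsub
  obtain ⟨A, hAfin, hAnet⟩ := Metric.totallyBounded_iff.1 himg (ε/4) hε4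
  haveI : Fintype ↥A := hAfin.fintype
  set Φ : (Y →L[𝕜] 𝕜) → (↥A → 𝕜) := fun g a => g a with hΦ
  have hΦim : TotallyBounded (Φ '' Metric.closedBall 0 1) := by
    set R : ℝ := ∑ a : ↥A, ‖(a : Y)‖ with hR
    have hRnn : 0 ≤ R := Finset.sum_nonneg fun a _ => norm_nonneg _
    have hsub : Φ '' Metric.closedBall 0 1 ⊆ Metric.closedBall 0 R := by
      rintro - ⟨g, hg, rfl⟩
      rw [Metric.mem_closedBall, dist_zero_right]
      rw [Metric.mem_closedBall, dist_zero_right] at hg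
      refine pi_norm_le_iff_of_nonneg hRnn |>.2 fun a => ?_
      calc ‖g (a : Y)‖ ≤ ‖g‖ * ‖(a : Y)‖ := g.le_opNorm _
        _ ≤ 1 * ‖(a : Y)‖ := by
            exact mul_le_mul_of_nonneg_right hg (norm_nonneg _)
        _ = ‖(a : Y)‖ := one_mul _
        _ ≤ R := Finset.single_le_sum (f := fun a : ↥A => ‖(a : Y)‖)
            (fun a _ => norm_nonneg _) (Finset.mem_univ a)
    exact (isCompact_closedBall (0 : ↥A → 𝕜) R).totallyBounded.subset hsub
  obtain ⟨t, hts, htfin, htnet⟩ := totallyBounded_iff_subset.1 hΦim _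
    (Metric.dist_mem_uniformity hε4)
  choose gy hgy hgyΦ using fun (y : ↥t) => hts y.2
  haveI : Finite ↥t := htfin
  refine ⟨Set.range (fun y : ↥t => (gy y).comp T), Set.finite_range _, ?_⟩
  rintro f ⟨g, hg, rfl⟩
  have hgB : g ∈ Metric.closedBall (0 : Y →L[𝕜] 𝕜) 1 := by
    rwa [Metric.mem_closedBall, dist_zero_right]
  obtain ⟨y, hyt, hdy⟩ := Set.mem_iUnion₂.1 (htnet ⟨g, hgB, rfl⟩)
  set y' : ↥t := ⟨y, hyt⟩
  have hkey : ∀ a : ↥A, ‖g (a : Y) - gy y' (a : Y)‖ < ε/4 := by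
    intro a
    have h1 : dist (Φ g) (Φ (gy y')) < ε/4 := by
      rw [hgyΦ y']; exact hdy
    have h2 := dist_le_pi_dist (Φ g) (Φ (gy y')) a
    have h3 : dist (g (a:Y)) ((gy y') (a:Y)) < ε/4 := lt_of_le_of_lt h2 h1
    rwa [dist_eq_norm] at h3
  have hop : ‖g.comp T - (gy y').comp T‖ ≤ 3 * (ε/4) := by
    refine ContinuousLinearMap.opNorm_le_bound _ (by positivity) fun x => ?_
    rcases eq_or_ne x 0 with rfl | hx
    · simp
    · set c : 𝕜 := (‖x‖ : 𝕜) with hc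
      have hc0 : c ≠ 0 := by
        simp [hc, RCLike.ofReal_eq_zero, norm_eq_zero, hx]
      set x' : X := c⁻¹ • x with hx'
      have hxx' : x = c • x' := (smul_inv_smul₀ hc0 x).symm
      have hnx' : ‖x'‖ = 1 := by
        rw [hx', norm_smul, norm_inv, RCLike.norm_ofReal, abs_of_nonneg (norm_nonneg x)]
        field_simp [norm_eq_zero, hx]
      have hTx' : T x' ∈ T '' Metric.closedBall 0 1 :=
        ⟨x', by simp [Metric.mem_closedBall, hnx'], rfl⟩
      obtain ⟨a, haA, haball⟩ := Set.mem_iUnion₂.1 (hAnet hTx')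
      have hda : ‖T x' - a‖ < ε/4 := by
        rw [Metric.mem_ball, dist_eq_norm] at haball; exact haball
      have key' : ‖g (T x') - gy y' (T x')‖ ≤ 3 * (ε/4) := by
        have e1 : ‖g (T x') - g a‖ ≤ ε/4 := by
          rw [← map_sub]
          calc ‖g (T x' - a)‖ ≤ ‖g‖ * ‖T x' - a‖ := g.le_opNorm _
            _ ≤ 1 * (ε/4) := mul_le_mul hg hda.le (norm_nonneg _) zero_le_one
            _ = ε/4 := one_mul _
        have e2 : ‖g a - gy y' a‖ ≤ ε/4 := (hkey ⟨a, haA⟩).le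
        have e3 : ‖gy y' a - gy y' (T x')‖ ≤ ε/4 := by
          rw [← map_sub]
          calc ‖gy y' (a - T x')‖ ≤ ‖gy y'‖ * ‖a - T x'‖ := (gy y').le_opNorm _
            _ ≤ 1 * (ε/4) := by
                refine mul_le_mul ?_ ?_ (norm_nonneg _) zero_le_one
                · have := hgy y'
                  rwa [Metric.mem_closedBall, dist_zero_right] at this
                · rw [norm_sub_rev]; exact hda.le
            _ = ε/4 := one_mul _
        calc ‖g (T x') - gy y' (T x')‖
            = ‖(g (T x') - g a) + (g a - gy y' a) + (gy y' a - gy y' (T x'))‖ := by ring_nf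
          _ ≤ ‖(g (T x') - g a) + (g a - gy y' a)‖ + ‖gy y' a - gy y' (T x')‖ :=
              norm_add_le _ _
          _ ≤ (‖g (T x') - g a‖ + ‖g a - gy y' a‖) + ‖gy y' a - gy y' (T x')‖ := by
              exact add_le_add_left (norm_add_le _ _) _
          _ ≤ (ε/4 + ε/4) + ε/4 := by gcongr
          _ = 3 * (ε/4) := by ring
      have happ : (g.comp T - (gy y').comp T) x = c • ((g.comp T - (gy y').comp T) x') := by
        rw [hxx', map_smul]
      rw [happ, norm_smul]
      have : ‖(g.comp T - (gy y').comp T) x'‖ = ‖g (T x') - gy y' (T x')‖ := by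
        simp [ContinuousLinearMap.sub_apply]
      rw [this]
      have hcnorm : ‖c‖ = ‖x‖ := by
        rw [hc, RCLike.norm_ofReal, abs_of_nonneg (norm_nonneg x)]
      rw [hcnorm, mul_comm]
      exact mul_le_mul_of_nonneg_right key' (norm_nonneg x)
  refine Set.mem_iUnion₂.2 ⟨(gy y').comp T, Set.mem_range_self _, ?_⟩
  rw [Metric.mem_ball, dist_eq_norm]
  calc ‖g.comp T - (gy y').comp T‖ ≤ 3 * (ε/4) := hop
    _ < ε := by linarith

lemma terz_arith (k : ℕ) :
    (2:ℝ)^(k+2) * ((1/2)^(2*(k+1)+2) + (1/2)^(2*k+2)) ≤ 5 * ((1/2):ℝ)^(k+1) := by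
  have h1 : ((1/2:ℝ))^k * 2^k = 1 := by rw [← mul_pow]; norm_num
  have h2 : (0:ℝ) < (1/2)^k := by positivity
  have h3 : (0:ℝ) < (2:ℝ)^k := by positivity
  have e1 : (2:ℝ)^(k+2) = 4 * 2^k := by ring
  have e2 : ((1/2:ℝ))^(2*(k+1)+2) = ((1/2)^k)^2 * (1/16) := by ring
  have e3 : ((1/2:ℝ))^(2*k+2) = ((1/2)^k)^2 * (1/4) := by ring
  have e4 : ((1/2:ℝ))^(k+1) = (1/2)^k * (1/2) := by ring
  rw [e1, e2, e3, e4]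
  nlinarith [h1, h2, h3]

end Aux

/-- If `T : X → Y` is a compact operator between Banach spaces, then there is a sequence `(uₙ)`
of continuous linear functionals on `X` with `‖uₙ‖ → 0` such that `‖T x‖ ≤ sup_n |uₙ x|`
for every `x ∈ X`. -/
theorem terzioglu_necessity {𝕜 X Y : Type*} [RCLike 𝕜]
    [NormedAddCommGroup X] [NormedSpace 𝕜 X] [CompleteSpace X]
    [NormedAddCommGroup Y] [NormedSpace 𝕜 Y] [CompleteSpace Y]
    (T : X →L[𝕜] Y) (hT : IsCompactOperator T) :
    ∃ u : ℕ → (X →L[𝕜] 𝕜),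
      Tendsto (fun n => ‖u n‖) atTop (nhds 0) ∧
      ∀ x : X, ‖T x‖ ≤ ⨆ n, ‖u n x‖ := by
  classical
  set K : Set (X →L[𝕜] 𝕜) := {f | ∃ g : Y →L[𝕜] 𝕜, ‖g‖ ≤ 1 ∧ f = g.comp T} with hKdef
  have hTB : TotallyBounded K := terz_schauder_tb T hT
  set εs : ℕ → ℝ := fun k => ((1:ℝ)/2)^(2*k+2) with hεs
  have hεpos : ∀ k, 0 < εs k := fun k => by positivity
  have hεle1 : ∀ k, εs k ≤ 1 := fun k => by
    rw [hεs]
    exact pow_le_one₀ (by norm_num) (by norm_num)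
  have hnets : ∀ k, ∃ t : Set (X →L[𝕜] 𝕜), t.Finite ∧ K ⊆ ⋃ y ∈ t, ball y (εs k) :=
    fun k => Metric.totallyBounded_iff.1 hTB _ (hεpos k)
  choose t htfin htnet using hnets
  set C : ℝ := ‖T‖ with hC
  have hC0 : 0 ≤ C := norm_nonneg T
  -- the lists of functionals, level by level
  set l : ℕ → List (X →L[𝕜] 𝕜) := fun k =>
    match k with
    | 0 => (((htfin 0).toFinset.filter (fun e => ‖e‖ ≤ C + 1)).toList).map
        (fun e => (2:ℝ) • e)
    | (k+1) => ((((htfin (k+1)).toFinset ×ˢ (htfin k).toFinset).filter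
        (fun p => ‖p.1 - p.2‖ ≤ εs (k+1) + εs k)).toList).map
        (fun p => ((2:ℝ)^(k+2)) • (p.1 - p.2)) with hl
  set c : ℕ → ℝ := fun k => (2*C+5) * ((1:ℝ)/2)^k with hc
  have hcpos : ∀ k, 0 ≤ c k := fun k => by positivity
  have hctend : Tendsto c atTop (nhds 0) := by
    rw [hc]
    have := (tendsto_pow_atTop_nhds_zero_of_lt_one (by norm_num : (0:ℝ) ≤ 1/2)
      (by norm_num : (1:ℝ)/2 < 1)).const_mul (2*C+5)
    simpa using this
  have hnorm : ∀ k, ∀ e ∈ l k, ‖e‖ ≤ c k := by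
    intro k e he
    match k with
    | 0 =>
      simp only [hl, List.mem_map, Finset.mem_toList, Finset.mem_filter,
        Set.Finite.mem_toFinset, decide_eq_true_eq] at he
      obtain ⟨e', ⟨he't, he'n⟩, rfl⟩ := he
      have hns : ‖(2:ℝ) • e'‖ ≤ ‖(2:ℝ)‖ * ‖e'‖ := ContinuousLinearMap.opNorm_smul_le _ _
      rw [Real.norm_ofNat] at hns
      refine le_trans hns ?_
      calc (2:ℝ) * ‖e'‖ ≤ 2 * (C+1) := by linarith
        _ ≤ (2*C+5) * ((1:ℝ)/2)^0 := by norm_num; linarith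
    | (k+1) =>
      simp only [hl, List.mem_map, Finset.mem_toList, Finset.mem_filter,
        Finset.mem_product, Set.Finite.mem_toFinset, decide_eq_true_eq] at he
      obtain ⟨p, ⟨hp, hpn⟩, rfl⟩ := he
      have hns : ‖((2:ℝ)^(k+2)) • (p.1 - p.2)‖ ≤ ‖(2:ℝ)^(k+2)‖ * ‖p.1 - p.2‖ :=
        ContinuousLinearMap.opNorm_smul_le _ _
      rw [norm_pow, Real.norm_ofNat] at hns
      refine le_trans hns ?_
      calc (2:ℝ)^(k+2) * ‖p.1 - p.2‖ ≤ 2^(k+2) * (εs (k+1) + εs k) := by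
            have : (0:ℝ) ≤ 2^(k+2) := by positivity
            exact mul_le_mul_of_nonneg_left hpn this
        _ ≤ 5 * ((1:ℝ)/2)^(k+1) := terz_arith k
        _ ≤ (2*C+5) * ((1:ℝ)/2)^(k+1) := by
            have : (0:ℝ) ≤ ((1:ℝ)/2)^(k+1) := by positivity
            nlinarith
  obtain ⟨u, hu0, hucov, humem⟩ := terz_enum_lemma l c hctend hnorm
  refine ⟨u, hu0, ?_⟩
  have hub : ∀ n, ‖u n‖ ≤ 2*C+5 := by
    intro n
    rcases humem n with h | h
    · rw [h, norm_zero]; positivity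
    · calc ‖u n‖ ≤ c n.unpair.1 := hnorm _ _ h
        _ ≤ (2*C+5) * 1 := by
            rw [hc]
            refine mul_le_mul_of_nonneg_left ?_ (by positivity)
            exact pow_le_one₀ (by norm_num) (by norm_num)
        _ = 2*C+5 := mul_one _
  intro x
  have hBdd : BddAbove (Set.range fun n => ‖u n x‖) := by
    refine ⟨(2*C+5) * ‖x‖, ?_⟩
    rintro - ⟨n, rfl⟩
    calc ‖u n x‖ ≤ ‖u n‖ * ‖x‖ := (u n).le_opNorm x
      _ ≤ (2*C+5) * ‖x‖ := mul_le_mul_of_nonneg_right (hub n) (norm_nonneg x)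
  set S : ℝ := ⨆ n, ‖u n x‖ with hSdef
  have hS0 : 0 ≤ S := le_trans (norm_nonneg _) (le_ciSup hBdd 0)
  have hmemS : ∀ k, ∀ e ∈ l k, ‖e x‖ ≤ S := by
    intro k e he
    obtain ⟨n, rfl⟩ := hucov k e he
    exact le_ciSup hBdd n
  -- key estimate for elements of K
  have key : ∀ v ∈ K, ‖v x‖ ≤ S := by
    intro v hv
    have hfk : ∀ k, ∃ w, w ∈ t k ∧ v ∈ ball w (εs k) := by
      intro k
      obtain ⟨w, hw, hb⟩ := Set.mem_iUnion₂.1 (htnet k hv)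
      exact ⟨w, hw, hb⟩
    choose f hf hfb using hfk
    have hdist : ∀ k, ‖v - f k‖ < εs k := by
      intro k
      have := hfb k
      rwa [mem_ball, dist_eq_norm] at this
    have hvC : ‖v‖ ≤ C := by
      obtain ⟨g, hg, rfl⟩ := hv
      calc ‖g.comp T‖ ≤ ‖g‖ * ‖T‖ := ContinuousLinearMap.opNorm_comp_le g T
        _ ≤ 1 * C := mul_le_mul_of_nonneg_right hg hC0
        _ = C := one_mul _
    have hf0n : ‖f 0‖ ≤ C + 1 := by
      have : ‖f 0‖ = ‖v - (v - f 0)‖ := by congr 1; abel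
      rw [this]
      calc ‖v - (v - f 0)‖ ≤ ‖v‖ + ‖v - f 0‖ := norm_sub_le _ _
        _ ≤ C + 1 := add_le_add hvC (le_trans (hdist 0).le (hεle1 0))
    -- level 0 element
    have hf0x : ‖(f 0) x‖ ≤ S / 2 := by
      have hmem : ((2:ℝ) • f 0) ∈ l 0 := by
        simp only [hl, List.mem_map, Finset.mem_toList, Finset.mem_filter,
          Set.Finite.mem_toFinset, decide_eq_true_eq]
        exact ⟨f 0, ⟨hf 0, hf0n⟩, rfl⟩
      have := hmemS 0 _ hmem
      have heval : ‖((2:ℝ) • f 0) x‖ = 2 * ‖(f 0) x‖ := by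
        have h1 : ((2:ℝ) • f 0) x = (2:ℝ) • ((f 0) x) := rfl
        have h2 : ‖(2:ℝ) • ((f 0) x)‖ = ‖(2:ℝ)‖ * ‖(f 0) x‖ := norm_smul _ _
        rw [h1, h2, Real.norm_ofNat]
      rw [heval] at this
      linarith
    -- difference elements
    have hdx : ∀ k, ‖(f (k+1) - f k) x‖ ≤ S * ((1:ℝ)/2)^(k+2) := by
      intro k
      have hmem : (((2:ℝ)^(k+2)) • (f (k+1) - f k)) ∈ l (k+1) := by
        simp only [hl, List.mem_map, Finset.mem_toList, Finset.mem_filter,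
          Finset.mem_product, Set.Finite.mem_toFinset, decide_eq_true_eq]
        refine ⟨(f (k+1), f k), ⟨⟨hf (k+1), hf k⟩, ?_⟩, rfl⟩
        calc ‖f (k+1) - f k‖ = ‖(f (k+1) - v) + (v - f k)‖ := by congr 1; abel
          _ ≤ ‖f (k+1) - v‖ + ‖v - f k‖ := norm_add_le _ _
          _ ≤ εs (k+1) + εs k := by
              rw [norm_sub_rev]
              exact add_le_add (hdist (k+1)).le (hdist k).le
      have := hmemS (k+1) _ hmem
      have heval : ‖(((2:ℝ)^(k+2)) • (f (k+1) - f k)) x‖ = 2^(k+2) * ‖(f (k+1) - f k) x‖ := by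
        have h1 : (((2:ℝ)^(k+2)) • (f (k+1) - f k)) x = ((2:ℝ)^(k+2)) • ((f (k+1) - f k) x) := rfl
        have h2 : ‖((2:ℝ)^(k+2)) • ((f (k+1) - f k) x)‖ = ‖(2:ℝ)^(k+2)‖ * ‖(f (k+1) - f k) x‖ :=
          norm_smul _ _
        rw [h1, h2, norm_pow, Real.norm_ofNat]
      rw [heval] at this
      have h2 : (0:ℝ) < 2^(k+2) := by positivity
      rw [← le_div_iff₀' h2] at this
      calc ‖(f (k+1) - f k) x‖ ≤ S / 2^(k+2) := this
        _ = S * ((1:ℝ)/2)^(k+2) := by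
            rw [div_pow, one_pow, div_eq_mul_inv, div_eq_mul_inv, one_mul]
    -- partial sums estimate
    have hpartial : ∀ m, ‖v x‖ ≤ S / 2 + S / 2 + εs m * ‖x‖ := by
      intro m
      have htel : (f m) x = (f 0) x + ∑ k ∈ Finset.range m, ((f (k+1)) x - (f k) x) := by
        rw [Finset.sum_range_sub (fun k => (f k) x) m]
        abel
      have h1 : ‖(f m) x‖ ≤ S / 2 + ∑ k ∈ Finset.range m, ‖(f (k+1) - f k) x‖ := by
        rw [htel]
        calc ‖(f 0) x + ∑ k ∈ Finset.range m, ((f (k+1)) x - (f k) x)‖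
            ≤ ‖(f 0) x‖ + ‖∑ k ∈ Finset.range m, ((f (k+1)) x - (f k) x)‖ := norm_add_le _ _
          _ ≤ ‖(f 0) x‖ + ∑ k ∈ Finset.range m, ‖(f (k+1)) x - (f k) x‖ :=
              add_le_add_right (norm_sum_le _ _) _
          _ ≤ S / 2 + ∑ k ∈ Finset.range m, ‖(f (k+1) - f k) x‖ := by
              refine add_le_add hf0x (le_of_eq (Finset.sum_congr rfl fun k _ => ?_))
              simp [ContinuousLinearMap.sub_apply]
      have h2 : ∑ k ∈ Finset.range m, ‖(f (k+1) - f k) x‖ ≤ S / 2 := by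
        calc ∑ k ∈ Finset.range m, ‖(f (k+1) - f k) x‖
            ≤ ∑ k ∈ Finset.range m, S * ((1:ℝ)/2)^(k+2) := Finset.sum_le_sum fun k _ => hdx k
          _ = (S / 4) * ∑ k ∈ Finset.range m, ((1:ℝ)/2)^k := by
              rw [Finset.mul_sum]
              refine Finset.sum_congr rfl fun k _ => ?_
              ring
          _ ≤ (S / 4) * 2 := by
              refine mul_le_mul_of_nonneg_left (sum_geometric_two_le m) (by positivity)
          _ = S / 2 := by ring
      have h3 : ‖v x‖ ≤ ‖(f m) x‖ + ‖(v - f m) x‖ := by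
        have : v x = (f m) x + (v - f m) x := by
          simp [ContinuousLinearMap.sub_apply]
        rw [this]
        exact norm_add_le _ _
      have h4 : ‖(v - f m) x‖ ≤ εs m * ‖x‖ := by
        calc ‖(v - f m) x‖ ≤ ‖v - f m‖ * ‖x‖ := (v - f m).le_opNorm x
          _ ≤ εs m * ‖x‖ := mul_le_mul_of_nonneg_right (hdist m).le (norm_nonneg x)
      linarith
    -- pass to the limit
    have hεtend : Tendsto (fun m => S / 2 + S / 2 + εs m * ‖x‖) atTop
        (nhds (S / 2 + S / 2 + 0 * ‖x‖)) := by
      refine Tendsto.add tendsto_const_nhds (Tendsto.mul_const _ ?_)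
      rw [hεs]
      have : Tendsto (fun m : ℕ => ((1:ℝ)/2)^m) atTop (nhds 0) :=
        tendsto_pow_atTop_nhds_zero_of_lt_one (by norm_num) (by norm_num)
      have hcomp : Tendsto (fun m : ℕ => 2*m+2) atTop atTop :=
        tendsto_atTop_mono (fun m => by simp only [id_eq]; omega) tendsto_id
      exact this.comp hcomp
    have := ge_of_tendsto' hεtend hpartial
    calc ‖v x‖ ≤ S / 2 + S / 2 + 0 * ‖x‖ := this
      _ = S := by ring
  -- conclude with Hahn–Banach
  obtain ⟨g, hg1, hgx⟩ := exists_dual_vector'' 𝕜 (T x)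
  have hv : g.comp T ∈ K := ⟨g, hg1, rfl⟩
  have : ‖(g.comp T) x‖ = ‖T x‖ := by
    rw [ContinuousLinearMap.comp_apply, hgx, RCLike.norm_ofReal, abs_of_nonneg (norm_nonneg _)]
  rw [← this]
  exact key _ hv
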